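/- (Lower-tail exponential bound under the null.) For each ε ∈ (0,1) let F_ε be a finite index set and (ω_{ε,k})_{k∈F_ε} positive weights with Σ_{k∈F_ε} ω_{ε,k}² = 1/2, let (ξ_k)_{k∈F_ε} be i.i.d. standard normal, and set t_ε = Σ_{k∈F_ε} ω_{ε,k}(ξ_k² − 1). Let T_ε → −∞ with T_ε · max_{k∈F_ε} ω_{ε,k} → 0 as ε → 0. Then P(t_ε ≤ T_ε) ≤ exp(−(T_ε²/2)(1+o(1))) as ε → 0; equivalently, limsup_{ε→0} T_ε^{−2} log P(t_ε ≤ T_ε) ≤ −1/2. -/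

import Mathlib

open MeasureTheory ProbabilityTheory Filter Real Set
open scoped Topology NNReal ENNReal

/-- Marginal of a product of probability measures. -/
lemma aux_pi_eval_apply {κ : Type*} [Fintype κ] (ν : κ → Measure ℝ)
    [∀ i, IsProbabilityMeasure (ν i)] (k : κ) (s : Set ℝ) :
    Measure.pi ν ((fun x : κ → ℝ => x k) ⁻¹' s) = ν k s := by
  classical
  have h : (fun x : κ → ℝ => x k) ⁻¹' s
      = Set.pi Set.univ (Function.update (fun _ => Set.univ) k s) :=
    Set.eval_preimage
  rw [h, Measure.pi_pi]
  have h1 : ∀ i, ν i (Function.update (fun _ => Set.univ) k s i)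
      = if i = k then ν k s else 1 := by
    intro i
    rcases eq_or_ne i k with rfl | hik
    · simp
    · simp [Function.update_of_ne hik, hik]
  simp_rw [h1]
  simp

/-- Coordinates are independent under a product of probability measures. -/
lemma aux_iIndepFun_eval {κ : Type*} [Fintype κ] (ν : κ → Measure ℝ)
    [∀ i, IsProbabilityMeasure (ν i)] :
    iIndepFun (fun (k : κ) (x : κ → ℝ) => x k) (Measure.pi ν) := by
  classical
  rw [ProbabilityTheory.iIndepFun_iff_measure_inter_preimage_eq_mul]
  intro S sets _hmeas
  have h1 : (⋂ i ∈ S, (fun x : κ → ℝ => x i) ⁻¹' sets i)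
      = Set.pi Set.univ (fun i => if i ∈ S then sets i else Set.univ) := by
    ext x
    simp only [Set.mem_iInter, Set.mem_preimage, Set.mem_pi, Set.mem_univ, forall_true_left]
    constructor
    · intro h i
      split_ifs with hi
      · exact h i hi
      · trivial
    · intro h i hi
      have := h i
      rwa [if_pos hi] at this
  rw [h1, Measure.pi_pi]
  have h2 : ∀ i, ν i (if i ∈ S then sets i else Set.univ)
      = if i ∈ S then ν i (sets i) else 1 := by
    intro i; split_ifs <;> simp
  simp_rw [h2, Finset.prod_ite_mem, Finset.univ_inter]
  exact Finset.prod_congr rfl fun i _ => (aux_pi_eval_apply ν i (sets i)).symm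

/-- Gaussian exponential-quadratic integral. -/
lemma aux_gauss_integral (c : ℝ) (hc : 0 < c) :
    ∫ y, Real.exp (-(c * (y ^ 2 - 1))) ∂(gaussianReal 0 1)
      = Real.exp c / Real.sqrt (1 + 2 * c) := by
  have h2c : (0:ℝ) < 1 + 2 * c := by linarith
  have hπ : (0:ℝ) < π := Real.pi_pos
  have hpdf : ∀ y : ℝ, gaussianPDFReal 0 1 y
      = (Real.sqrt (2 * π))⁻¹ * Real.exp (-(y ^ 2) / 2) := by
    intro y
    simp [gaussianPDFReal]
  rw [gaussianReal_of_var_ne_zero 0 one_ne_zero, gaussianPDF_def]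
  have hform : (fun x => ENNReal.ofReal (gaussianPDFReal 0 1 x))
      = (fun x => ((Real.toNNReal (gaussianPDFReal 0 1 x) : ℝ≥0) : ℝ≥0∞)) := rfl
  rw [hform, integral_withDensity_eq_integral_smul
    (by exact (measurable_gaussianPDFReal 0 1).real_toNNReal) _]
  have hint : ∀ x : ℝ, (Real.toNNReal (gaussianPDFReal 0 1 x)) • Real.exp (-(c * (x ^ 2 - 1)))
      = (Real.sqrt (2 * π))⁻¹ * Real.exp c * Real.exp (-(c + 1/2) * x ^ 2) := by
    intro x
    rw [NNReal.smul_def, Real.coe_toNNReal _ (gaussianPDFReal_nonneg _ _ _), hpdf x, smul_eq_mul,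
      mul_assoc, ← Real.exp_add, mul_assoc, ← Real.exp_add]
    congr 1
    ring
  simp_rw [hint]
  rw [MeasureTheory.integral_const_mul, integral_gaussian]
  have hc2 : c + 1/2 ≠ 0 := by positivity
  have hs : (Real.sqrt (2 * π))⁻¹ * Real.sqrt (π / (c + 1/2))
      = (Real.sqrt (1 + 2 * c))⁻¹ := by
    rw [← Real.sqrt_inv, ← Real.sqrt_mul (by positivity)]
    congr 1
    field_simp
    ring_nf
    rw [← Real.sqrt_mul (by positivity), inv_mul_cancel₀ (by positivity), Real.sqrt_one]
  calc (Real.sqrt (2 * π))⁻¹ * Real.exp c * Real.sqrt (π / (c + 1/2))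
      = Real.exp c * ((Real.sqrt (2 * π))⁻¹ * Real.sqrt (π / (c + 1/2))) := by ring
    _ = Real.exp c * (Real.sqrt (1 + 2 * c))⁻¹ := by rw [hs]
    _ = Real.exp c / Real.sqrt (1 + 2 * c) := by rw [div_eq_mul_inv]

/-- Per-factor moment generating function bound. -/
lemma aux_factor_bound (η a : ℝ) (hη0 : 0 < η) (hη1 : η ≤ 1) (ha0 : 0 ≤ a) (ha : a ≤ η / 8) :
    Real.exp a / Real.sqrt (1 + 2 * a) ≤ Real.exp ((1 + η) * a ^ 2) := by
  have h2a : (0:ℝ) < 1 + 2 * a := by linarith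
  have ha8 : a ≤ 1/8 := by linarith
  have hlog : 2*a - 2*a^2 - (2*a)^3 / (1 - 2*a) ≤ Real.log (1 + 2*a) := by
    have hxabs : |(-(2*a))| = 2*a := by
      rw [abs_neg, abs_of_nonneg (by linarith)]
    have hx : |(-(2*a))| < 1 := by rw [hxabs]; linarith
    have h := Real.abs_log_sub_add_sum_range_le hx 2
    have hsum : (∑ i ∈ Finset.range 2, (-(2*a)) ^ (i+1) / ((i : ℝ)+1)) = -(2*a) + 2*a^2 := by
      simp [Finset.sum_range_succ]
      ring
    rw [hsum, sub_neg_eq_add, hxabs] at h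
    have h3 := neg_le_of_abs_le h
    linarith
  have hd : (2*a)^3 / (1 - 2*a) ≤ 2*η*a^2 := by
    rw [div_le_iff₀ (by linarith : (0:ℝ) < 1 - 2*a)]
    nlinarith [sq_nonneg a, mul_nonneg ha0 ha0, mul_nonneg (mul_nonneg ha0 ha0) ha0]
  have hkey : a - Real.log (1 + 2*a) / 2 ≤ (1 + η) * a^2 := by nlinarith
  have hsqrt : Real.sqrt (1 + 2*a) = Real.exp (Real.log (1 + 2*a) / 2) := by
    rw [Real.exp_half, Real.exp_log h2a]
  rw [hsqrt, ← Real.exp_sub]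
  exact Real.exp_le_exp.mpr (by linarith)

/-- Main fixed-parameter estimate. -/
lemma aux_main {κ : Type*} [Fintype κ] (w : κ → ℝ) (hw : ∀ k, 0 < w k)
    (hnorm : ∑ k, w k ^ 2 = 1 / 2) (t η : ℝ) (ht : t ≤ -1)
    (hη0 : 0 < η) (hη1 : η ≤ 1)
    (hκ1 : ∀ k, |t| * w k < η / 8) (hκ2 : ∀ k, |t| * w k < 1 / 4) :
    Real.log (((Measure.pi fun _ : κ => gaussianReal 0 1)
        {x | (∑ k, w k * ((x k) ^ 2 - 1)) ≤ t}).toReal)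
      ≤ (-(1/2) + η / 2) * t ^ 2 := by
  classical
  set μ := Measure.pi (fun _ : κ => gaussianReal 0 1) with hμdef
  have ht0 : t < 0 := by linarith
  have habs : |t| = -t := abs_of_neg ht0
  have htpos : (0:ℝ) < |t| := by rw [habs]; linarith
  -- the sum of the weights is at least 2|t|
  have hsumw : 2 * |t| ≤ ∑ k, w k := by
    have h1 : ∀ k, 4 * |t| * w k ^ 2 ≤ w k := by
      intro k
      have h := hκ2 k
      nlinarith [hw k]
    have h2 : 4 * |t| * (1/2 : ℝ) ≤ ∑ k, w k := by
      calc 4 * |t| * (1/2 : ℝ) = ∑ k, 4 * |t| * w k ^ 2 := by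
            rw [← Finset.mul_sum, hnorm]
        _ ≤ ∑ k, w k := Finset.sum_le_sum fun k _ => h1 k
    linarith
  -- the summand functions
  set f : κ → (κ → ℝ) → ℝ := fun k x => w k * ((x k) ^ 2 - 1) with hfdef
  set X : (κ → ℝ) → ℝ := fun x => ∑ k, w k * ((x k) ^ 2 - 1) with hXdef
  have hXsum : X = ∑ k, f k := by
    funext x
    simp [hXdef, hfdef, Finset.sum_apply]
  -- positivity of the probability
  have hbox : (Set.pi Set.univ fun _ : κ => Set.Icc (-(1/2):ℝ) (1/2))
      ⊆ {x : κ → ℝ | (∑ k, w k * ((x k) ^ 2 - 1)) ≤ t} := by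
    intro x hx
    simp only [Set.mem_pi, Set.mem_univ, forall_true_left] at hx
    have hterm : ∀ k, w k * ((x k)^2 - 1) ≤ w k * (-(1/2)) := by
      intro k
      apply mul_le_mul_of_nonneg_left _ (hw k).le
      have h1 := (hx k).1
      have h2 := (hx k).2
      nlinarith
    have hsum : (∑ k, w k * ((x k)^2 - 1)) ≤ (∑ k, w k) * (-(1/2)) := by
      rw [Finset.sum_mul]
      exact Finset.sum_le_sum fun k _ => hterm k
    have : (∑ k, w k) * (-(1/2):ℝ) ≤ t := by
      rw [habs] at hsumw
      linarith
    exact le_trans hsum this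
  have hpos : 0 < (μ {x : κ → ℝ | (∑ k, w k * ((x k) ^ 2 - 1)) ≤ t}).toReal := by
    have hI : gaussianReal 0 1 (Set.Icc (-(1/2):ℝ) (1/2)) ≠ 0 := by
      intro h0
      have hv := (gaussianReal_absolutelyContinuous' 0 one_ne_zero) h0
      rw [Real.volume_Icc] at hv
      simp only [ENNReal.ofReal_eq_zero] at hv
      norm_num at hv
    have hbm : μ (Set.pi Set.univ fun _ : κ => Set.Icc (-(1/2):ℝ) (1/2))
        = ∏ _k : κ, gaussianReal 0 1 (Set.Icc (-(1/2):ℝ) (1/2)) := Measure.pi_pi _ _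
    have hb0 : μ (Set.pi Set.univ fun _ : κ => Set.Icc (-(1/2):ℝ) (1/2)) ≠ 0 := by
      rw [hbm]
      exact Finset.prod_ne_zero_iff.mpr fun k _ => hI
    have hm0 : μ {x : κ → ℝ | (∑ k, w k * ((x k) ^ 2 - 1)) ≤ t} ≠ 0 := by
      intro h0
      exact hb0 (le_antisymm (le_trans (measure_mono hbox) h0.le) zero_le)
    exact ENNReal.toReal_pos hm0 (measure_ne_top μ _)
  -- measurability and integrability
  have hmeasf : ∀ k, Measurable (f k) := by
    intro k
    apply Measurable.const_mul
    exact ((measurable_pi_apply k).pow_const 2).sub_const 1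
  have hmeasX : Measurable X := by
    apply Finset.measurable_sum
    intro k _
    apply Measurable.const_mul
    exact ((measurable_pi_apply k).pow_const 2).sub_const 1
  have hXge : ∀ x : κ → ℝ, -(∑ k, w k) ≤ X x := by
    intro x
    rw [← Finset.sum_neg_distrib]
    apply Finset.sum_le_sum
    intro k _
    nlinarith [hw k, sq_nonneg (x k)]
  have h_int : Integrable (fun x => Real.exp (t * X x)) μ := by
    refine Integrable.mono' (integrable_const (Real.exp (-t * ∑ k, w k)))
      (Measurable.aestronglyMeasurable ?_) (ae_of_all _ fun x => ?_)
    · exact (hmeasX.const_mul t).exp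
    · rw [Real.norm_eq_abs, Real.abs_exp]
      apply Real.exp_le_exp.mpr
      have h := hXge x
      nlinarith
  -- independence
  have hindep : iIndepFun f μ := by
    have h0 := aux_iIndepFun_eval (fun _ : κ => gaussianReal 0 1)
    have h1 := h0.comp (fun k => fun y : ℝ => w k * (y ^ 2 - 1))
      (fun k => ((measurable_id.pow_const 2).sub_const 1).const_mul (w k))
    exact h1
  have hmgf_sum : mgf X μ t = ∏ k, mgf (f k) μ t := by
    rw [hXsum]
    exact hindep.mgf_sum hmeasf Finset.univ
  -- individual mgf values
  have hmap : ∀ k : κ, μ.map (fun x : κ → ℝ => x k) = gaussianReal 0 1 := by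
    intro k
    ext s hs
    rw [Measure.map_apply (measurable_pi_apply k) hs]
    exact aux_pi_eval_apply _ k s
  have hmgf_k : ∀ k : κ, mgf (f k) μ t
      = Real.exp (|t| * w k) / Real.sqrt (1 + 2 * (|t| * w k)) := by
    intro k
    have hstep : mgf (f k) μ t = ∫ y, Real.exp (t * (w k * (y ^ 2 - 1))) ∂(gaussianReal 0 1) := by
      rw [mgf, ← hmap k, integral_map (measurable_pi_apply k).aemeasurable]
      exact Measurable.aestronglyMeasurable
        ((((measurable_id.pow_const 2).sub_const 1).const_mul (w k)).const_mul t).exp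
    rw [hstep]
    have harg : ∀ y : ℝ, t * (w k * (y ^ 2 - 1)) = -((|t| * w k) * (y ^ 2 - 1)) := by
      intro y
      rw [habs]
      ring
    simp_rw [harg]
    exact aux_gauss_integral (|t| * w k) (mul_pos htpos (hw k))
  -- product bound
  have hprod : ∏ k, mgf (f k) μ t ≤ Real.exp ((1 + η) * (t ^ 2 / 2)) := by
    calc ∏ k, mgf (f k) μ t ≤ ∏ k, Real.exp ((1 + η) * (|t| * w k) ^ 2) := by
          apply Finset.prod_le_prod (fun k _ => mgf_nonneg)
          intro k _
          rw [hmgf_k k]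
          exact aux_factor_bound η (|t| * w k) hη0 hη1
            (mul_nonneg htpos.le (hw k).le) (hκ1 k).le
      _ = Real.exp (∑ k, (1 + η) * (|t| * w k) ^ 2) := (Real.exp_sum _ _).symm
      _ = Real.exp ((1 + η) * (t ^ 2 / 2)) := by
          congr 1
          rw [← Finset.mul_sum]
          congr 1
          have : ∀ k : κ, (|t| * w k) ^ 2 = t ^ 2 * w k ^ 2 := by
            intro k
            rw [mul_pow, sq_abs]
          simp_rw [this]
          rw [← Finset.mul_sum, hnorm]
          ring
  -- Chernoff bound
  have hcher := measure_le_le_exp_mul_mgf (μ := μ) (X := X) (t := t) t (by linarith) h_int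
  have hsetX : {x : κ → ℝ | (∑ k, w k * ((x k) ^ 2 - 1)) ≤ t} = {x | X x ≤ t} := rfl
  have hP : (μ {x : κ → ℝ | (∑ k, w k * ((x k) ^ 2 - 1)) ≤ t}).toReal
      ≤ Real.exp ((-(1/2) + η / 2) * t ^ 2) := by
    rw [hsetX]
    calc (μ {x | X x ≤ t}).toReal ≤ Real.exp (-t * t) * mgf X μ t := hcher
      _ = Real.exp (-t * t) * ∏ k, mgf (f k) μ t := by rw [hmgf_sum]
      _ ≤ Real.exp (-t * t) * Real.exp ((1 + η) * (t ^ 2 / 2)) :=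
          mul_le_mul_of_nonneg_left hprod (Real.exp_pos _).le
      _ = Real.exp ((-(1/2) + η / 2) * t ^ 2) := by
          rw [← Real.exp_add]
          congr 1
          ring
  calc Real.log ((μ {x : κ → ℝ | (∑ k, w k * ((x k) ^ 2 - 1)) ≤ t}).toReal)
      ≤ Real.log (Real.exp ((-(1/2) + η / 2) * t ^ 2)) :=
        (Real.log_le_log_iff hpos (Real.exp_pos _)).mpr hP
    _ = (-(1/2) + η / 2) * t ^ 2 := Real.log_exp _

/-- Lower-tail exponential bound under the null: for
`t_ε = Σ_{k∈F_ε} ω_{ε,k}(ξ_k² − 1)` with i.i.d. standard normal `ξ_k`, weights normalized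
by `Σ ω² = 1/2`, and `T_ε → −∞` with `T_ε · max_k ω_{ε,k} → 0`, one has
`P(t_ε ≤ T_ε) ≤ exp(−(T_ε²/2)(1+o(1)))`, i.e. `limsup T_ε⁻² log P(t_ε ≤ T_ε) ≤ −1/2`. -/
theorem lower_tail_bound_null
    (ι : Type*) (F : ℝ → Finset ι) (ω : ℝ → ι → ℝ)
    (hωpos : ∀ᶠ ε in 𝓝[>] (0 : ℝ), ∀ k ∈ F ε, 0 < ω ε k)
    (hωnorm : ∀ᶠ ε in 𝓝[>] (0 : ℝ), ∑ k ∈ F ε, (ω ε k) ^ 2 = 1 / 2)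
    (T : ℝ → ℝ) (hT : Tendsto T (𝓝[>] (0 : ℝ)) atBot)
    (hTω : ∀ κ > (0 : ℝ), ∀ᶠ ε in 𝓝[>] (0 : ℝ), ∀ k ∈ F ε, |T ε| * ω ε k < κ) :
    ∀ b : ℝ, -(1 / 2 : ℝ) < b → ∀ᶠ ε in 𝓝[>] (0 : ℝ),
      Real.log (((Measure.pi fun _ : (F ε : Finset ι) => gaussianReal 0 1)
          {x | (∑ k : (F ε : Finset ι), ω ε k * ((x k) ^ 2 - 1)) ≤ T ε}).toReal)
        ≤ b * (T ε) ^ 2 := by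
  intro b hb
  set η := min (2 * b + 1) 1 with hηdef
  have hη0 : 0 < η := lt_min (by linarith) one_pos
  have hη1 : η ≤ 1 := min_le_right _ _
  have hηb : -(1/2 : ℝ) + η / 2 ≤ b := by
    have := min_le_left (2 * b + 1) 1
    rw [← hηdef] at this
    linarith
  filter_upwards [hωpos, hωnorm, hT.eventually (eventually_le_atBot (-1)),
    hTω (η / 8) (by positivity), hTω (1/4) (by norm_num)] with ε hpos hnorm hTle hk1 hk2
  have hnorm' : ∑ k : (F ε : Finset ι), (ω ε k) ^ 2 = 1 / 2 := by
    rw [Finset.sum_coe_sort (F ε) (fun k => (ω ε k) ^ 2)]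
    exact hnorm
  have hmain := aux_main (κ := (F ε : Finset ι)) (fun k => ω ε k)
    (fun k => hpos k k.2) hnorm' (T ε) η hTle hη0 hη1
    (fun k => hk1 k k.2) (fun k => hk2 k k.2)
  refine le_trans hmain ?_
  exact mul_le_mul_of_nonneg_right hηb (sq_nonneg _)
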